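/- For every t ∈ ℝ one has g(t)² − g(t)·g'(t)·t ≥ 0. -/

import Mathlib

/-- `g(t)² − g(t) g'(t) t ≥ 0` for every real `t`. -/
theorem stmt_5 (g : ℝ → ℝ) (hg0 : g 0 = 0)
    (hg : ∀ t : ℝ, HasDerivAt g ((1 + 2 * g t ^ 2) ^ (-(1 / 2) : ℝ)) t) :
    ∀ t : ℝ, g t ^ 2 - g t * deriv g t * t ≥ 0 := by
  have hS : ∀ t : ℝ, (0:ℝ) < 1 + 2 * g t ^ 2 := by intro t; positivity
  have hsqrt : ∀ t : ℝ, (0:ℝ) < Real.sqrt (1 + 2 * g t ^ 2) := fun t =>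
    Real.sqrt_pos.mpr (hS t)
  have hrpow : ∀ t : ℝ, ((1 + 2 * g t ^ 2) ^ (-(1 / 2) : ℝ))
      = (Real.sqrt (1 + 2 * g t ^ 2))⁻¹ := by
    intro t
    rw [Real.rpow_neg (hS t).le, Real.sqrt_eq_rpow]
  -- H = g * sqrt(1+2g²) - id is monotone
  set H : ℝ → ℝ := fun t => g t * Real.sqrt (1 + 2 * g t ^ 2) - t with hHdef
  have hH : ∀ t : ℝ, HasDerivAt H (2 * g t ^ 2 / (1 + 2 * g t ^ 2)) t := by
    intro t
    have hgt := hg t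
    have h1 : HasDerivAt (fun t => 1 + 2 * g t ^ 2)
        (2 * ((2:ℕ) * g t ^ 1 * ((1 + 2 * g t ^ 2) ^ (-(1 / 2) : ℝ)))) t :=
      ((hgt.pow 2).const_mul 2).const_add 1
    have h2 := (Real.hasDerivAt_sqrt (ne_of_gt (hS t))).comp t h1
    have h3 := (hgt.mul h2).sub (hasDerivAt_id t)
    convert h3 using 1
    case e'_4 => rfl
    case e'_5 => rfl
    case e'_8 => rfl
    have hs2 : Real.sqrt (1 + 2 * g t ^ 2) ^ 2 = 1 + 2 * g t ^ 2 :=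
      Real.sq_sqrt (hS t).le
    rw [hrpow t]
    simp only [Function.comp_apply, Nat.cast_ofNat]
    field_simp
    nlinarith [hsqrt t, hs2]
  have hHdiff : Differentiable ℝ H := fun t => (hH t).differentiableAt
  have hHmono : Monotone H := by
    apply monotone_of_deriv_nonneg hHdiff
    intro t
    rw [(hH t).deriv]
    positivity
  have hgmono : Monotone g := by
    apply monotone_of_deriv_nonneg (fun t => (hg t).differentiableAt)
    intro t
    rw [(hg t).deriv]
    positivity
  have hH0 : H 0 = 0 := by
    simp [hHdef, hg0]
  intro t
  rw [(hg t).deriv, hrpow t]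
  set a := g t with ha
  set s := Real.sqrt (1 + 2 * g t ^ 2) with hs
  have hs0 : 0 < s := hsqrt t
  have key : a * (a * s - t) ≥ 0 := by
    rcases le_total 0 t with ht | ht
    · have ha0 : 0 ≤ a := by rw [ha, ← hg0]; exact hgmono ht
      have hHt : 0 ≤ a * s - t := by
        have := hHmono ht
        rw [hH0] at this
        simpa [hHdef] using this
      exact mul_nonneg ha0 hHt
    · have ha0 : a ≤ 0 := by rw [ha, ← hg0]; exact hgmono ht
      have hHt : a * s - t ≤ 0 := by
        have := hHmono ht
        rw [hH0] at this
        simpa [hHdef] using this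
      nlinarith [ha0, hHt]
  have : a ^ 2 - a * s⁻¹ * t = s⁻¹ * (a * (a * s - t)) := by
    field_simp
  rw [this]
  exact mul_nonneg (inv_nonneg.mpr hs0.le) key
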